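/- arXiv:2008.11303 — 3 statements merged into one kernel-verified Lean document; each statement's English description precedes it below -/
import Mathlib

section
/- Let x be a feasible solution of a covering integer program, and suppose column j is contained in column i, where i ≠ j. Define x' : I → ℕ by x'(j) = 0, x'(i) = x(i) + x(j), and x'(p) = x(p) for every column p ∉ {i, j}. Then x' is also feasible and has the same cost as x. -/
lemma split_sum_two {I : Type*} [Fintype I] [DecidableEq I] (i j : I) (hij : i ≠ j)
    {M : Type*} [AddCommMonoid M] (f : I → M) :
    ∑ p : I, f p = f i + f j + ∑ p ∈ (Finset.univ.erase i).erase j, f p := by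
  rw [← Finset.add_sum_erase _ f (Finset.mem_univ i),
    ← Finset.add_sum_erase _ f (Finset.mem_erase.mpr ⟨hij.symm, Finset.mem_univ j⟩), add_assoc]

/-- A covering integer program: columns `I`, rows `K`, matrix `A`, demand `d`, cost `c`.
If column `j` is contained in column `i` (same cost, componentwise smaller coefficients),
then merging the usage of `j` into `i` preserves feasibility and cost. -/
theorem merge_contained_column_feasible_and_cost
    {I K : Type*} [Fintype I] [Fintype K]
    (A : I → K → ℕ) (d : K → ℕ) (c : I → ℝ)
    (x : I → ℕ) (i j : I) (hij : i ≠ j)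
    (hfeas : ∀ k : K, d k ≤ ∑ p : I, A p k * x p)
    (hcost : c i = c j) (hA : ∀ k : K, A j k ≤ A i k)
    (x' : I → ℕ)
    (hx'j : x' j = 0) (hx'i : x' i = x i + x j)
    (hx'p : ∀ p : I, p ≠ i → p ≠ j → x' p = x p) :
    (∀ k : K, d k ≤ ∑ p : I, A p k * x' p) ∧
      (∑ p : I, c p * (x' p : ℝ)) = ∑ p : I, c p * (x p : ℝ) := by
  classical
  constructor
  · intro k
    have hf := hfeas k
    rw [split_sum_two i j hij (fun p => A p k * x p)] at hf
    rw [split_sum_two i j hij (fun p => A p k * x' p)]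
    have heq : ∑ p ∈ (Finset.univ.erase i).erase j, A p k * x' p
        = ∑ p ∈ (Finset.univ.erase i).erase j, A p k * x p := by
      apply Finset.sum_congr rfl
      intro p hp
      simp only [Finset.mem_erase] at hp
      rw [hx'p p hp.2.1 hp.1]
    rw [heq, hx'i, hx'j]
    have : A i k * x i + A j k * x j ≤ A i k * (x i + x j) + A j k * 0 := by
      have := hA k
      nlinarith
    omega
  · rw [split_sum_two i j hij (fun p => c p * (x' p : ℝ)),
      split_sum_two i j hij (fun p => c p * (x p : ℝ))]
    have heq : ∑ p ∈ (Finset.univ.erase i).erase j, c p * (x' p : ℝ)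
        = ∑ p ∈ (Finset.univ.erase i).erase j, c p * (x p : ℝ) := by
      apply Finset.sum_congr rfl
      intro p hp
      simp only [Finset.mem_erase] at hp
      rw [hx'p p hp.2.1 hp.1]
    rw [heq, hx'i, hx'j, hcost]
    push_cast
    ring
end

section
/- Let B be a finite set of packing-pattern uses, each b ∈ B having a beam type τ(b) belonging to a finite set C of types, and let L > 0 be the common mold length, with each use b packing beams of total length load(b) satisfying 0 ≤ load(b) ≤ L. Let D : C → ℕ give the number of bars a pattern of each type demands, and let S : C → ℝ with S(c) ≥ 0 satisfy Σ_{b : τ(b) = c} load(b) ≥ S(c) for every type c ∈ C. Then the total number of bars demanded satisfies Σ_{b∈B} D(τ(b)) ≥ ⌈(Σ_{c∈C} D(c)·S(c)) / L⌉. -/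
/-- Bar-count lower bound: each packing-pattern use `b` has beam type `τ b`, packs
total beam length `load b ∈ [0, L]` in a mold of length `L > 0`, and demands
`D (τ b)` bars.  If the uses of each type `c` pack at least total length `S c ≥ 0`,
then the total number of bars demanded is at least `⌈(∑ c, D c · S c) / L⌉`. -/
theorem bar_count_lower_bound
    {B C : Type*} [Fintype B] [Fintype C] [DecidableEq C]
    (τ : B → C) (L : ℝ) (hL : 0 < L)
    (load : B → ℝ) (hload0 : ∀ b, 0 ≤ load b) (hloadL : ∀ b, load b ≤ L)
    (D : C → ℕ) (S : C → ℝ) (hS0 : ∀ c, 0 ≤ S c)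
    (hcover : ∀ c : C, S c ≤ ∑ b ∈ Finset.univ.filter (fun b : B => τ b = c), load b) :
    ⌈(∑ c : C, (D c : ℝ) * S c) / L⌉ ≤ (∑ b : B, D (τ b) : ℤ) := by
  rw [Int.ceil_le]
  push_cast
  rw [div_le_iff₀ hL]
  calc ∑ c : C, (D c : ℝ) * S c
      ≤ ∑ c : C, (D c : ℝ) * ∑ b ∈ Finset.univ.filter (fun b : B => τ b = c), load b := by
        apply Finset.sum_le_sum
        intro c _
        exact mul_le_mul_of_nonneg_left (hcover c) (Nat.cast_nonneg _)
    _ = ∑ b : B, (D (τ b) : ℝ) * load b := by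
        have h : ∀ c : C, (D c : ℝ) * ∑ b ∈ Finset.univ.filter (fun b : B => τ b = c), load b
            = ∑ b ∈ Finset.univ.filter (fun b : B => τ b = c), (D (τ b) : ℝ) * load b := by
          intro c
          rw [Finset.mul_sum]
          exact Finset.sum_congr rfl fun b hb => by rw [(Finset.mem_filter.mp hb).2]
        simp_rw [h]
        exact Finset.sum_fiberwise Finset.univ τ (fun b => (D (τ b) : ℝ) * load b)
    _ ≤ ∑ b : B, (D (τ b) : ℝ) * L := by
        apply Finset.sum_le_sum
        intro b _
        exact mul_le_mul_of_nonneg_left (hloadL b) (Nat.cast_nonneg _)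
    _ = (∑ b : B, (D (τ b) : ℝ)) * L := by rw [← Finset.sum_mul]
end

section
/- Let P be a finite set of patterns, a : P → ℕ, f : P → ℝ, γ ≥ 0 a real number with f(p) ≥ γ·a(p) for every p ∈ P, L > 0 a real number, and S ≥ 0 a real number. If y : P → ℕ satisfies L · Σ_{p∈P} a(p)·y(p) ≥ S, then Σ_{p∈P} f(p)·y(p) ≥ γ·⌈S/L⌉. -/
/-- Combined ceiling and minimum-ratio waste bound: if each pattern `p` produces
`a p` bars of length `L > 0` with waste `f p ≥ γ · a p`, and the total bar length
produced covers `S ≥ 0` (i.e. `L · ∑ p, a p · y p ≥ S`), then the total waste is at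
least `γ · ⌈S / L⌉`. -/
theorem waste_ceiling_lower_bound
    {P : Type*} [Fintype P]
    (a : P → ℕ) (f : P → ℝ) (γ : ℝ) (hγ : 0 ≤ γ)
    (hfa : ∀ p : P, γ * (a p : ℝ) ≤ f p)
    (L : ℝ) (hL : 0 < L) (S : ℝ) (hS : 0 ≤ S)
    (y : P → ℕ)
    (hcov : S ≤ L * ∑ p : P, (a p : ℝ) * (y p : ℝ)) :
    γ * (⌈S / L⌉ : ℝ) ≤ ∑ p : P, f p * (y p : ℝ) := by
  set N : ℕ := ∑ p : P, a p * y p with hN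
  have hNsum : ((N : ℝ)) = ∑ p : P, (a p : ℝ) * (y p : ℝ) := by
    push_cast [hN]; rfl
  have h1 : S / L ≤ (N : ℝ) := by
    rw [div_le_iff₀ hL, mul_comm]
    rwa [hNsum]
  have hceil : (⌈S / L⌉ : ℝ) ≤ (N : ℝ) := by
    have : ⌈S / L⌉ ≤ (N : ℤ) := Int.ceil_le.mpr (by exact_mod_cast h1)
    exact_mod_cast this
  calc γ * (⌈S / L⌉ : ℝ) ≤ γ * (N : ℝ) := by
        exact mul_le_mul_of_nonneg_left hceil hγ
    _ = ∑ p : P, γ * (a p : ℝ) * (y p : ℝ) := by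
        rw [hNsum, Finset.mul_sum]; simp [mul_assoc]
    _ ≤ ∑ p : P, f p * (y p : ℝ) := by
        apply Finset.sum_le_sum
        intro p _
        exact mul_le_mul_of_nonneg_right (hfa p) (Nat.cast_nonneg _)
end
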